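/- arXiv:1704.00667 — 3 statements merged into one kernel-verified Lean document; each statement's English description precedes it below -/
import Mathlib

section
/- Off-diagonal Gram–Schmidt smallness: in the setting above (v̂ⁱ = (eⁱ, wᵢ), |wᵢ| ≤ C₀, (vˡ) the Gram–Schmidt orthonormalization), for any i ≠ ℓ one has |⟨v̂ⁱ, vˡ⟩| ≤ √2 C₀. -/
open scoped RealInnerProductSpace

/-- Off-diagonal Gram–Schmidt smallness: with `v̂ⁱ = (eⁱ, wᵢ)`, `|wᵢ| ≤ C₀ ≤ 1`, and
`vˡ` the Gram–Schmidt orthonormalization, `|⟨v̂ⁱ, vˡ⟩| ≤ √2 C₀` for `i ≠ l`. -/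
theorem stmt_7 (d m : ℕ) (C₀ : ℝ) (hC₀ : 0 ≤ C₀) (hC₀1 : C₀ ≤ 1)
    [WellFoundedLT (Fin d)]
    (v : Fin d → EuclideanSpace ℝ (Fin (d + m)))
    (hfst : ∀ i j : Fin d, v i (Fin.castAdd m j) = if i = j then 1 else 0)
    (hsnd : ∀ i : Fin d,
      Real.sqrt (∑ j : Fin m, (v i (Fin.natAdd d j)) ^ 2) ≤ C₀) :
    ∀ i l : Fin d, i ≠ l →
      |⟪v i, InnerProductSpace.gramSchmidtNormed ℝ v l⟫| ≤ Real.sqrt 2 * C₀ := by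
  intro i l hil
  have hsqrt2 : (1 : ℝ) ≤ Real.sqrt 2 := by
    rw [show (1:ℝ) = Real.sqrt 1 by simp]
    exact Real.sqrt_le_sqrt (by norm_num)
  have hC2 : C₀ ≤ Real.sqrt 2 * C₀ := by nlinarith
  set u := InnerProductSpace.gramSchmidtNormed ℝ v l with hu
  rcases lt_or_gt_of_ne hil with hlt | hgt
  · -- i < l : inner product is zero
    have hvi : v i ∈ Submodule.span ℝ (InnerProductSpace.gramSchmidt ℝ v '' Set.Iic i) :=
      InnerProductSpace.mem_span_gramSchmidt ℝ v le_rfl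
    have horth : ⟪v i, InnerProductSpace.gramSchmidt ℝ v l⟫ = 0 := by
      refine Submodule.span_induction ?_ (by simp) ?_ ?_ hvi
      · rintro x ⟨j, hj, rfl⟩
        exact InnerProductSpace.gramSchmidt_orthogonal ℝ v (ne_of_lt (lt_of_le_of_lt hj hlt))
      · intro x y _ _ hx hy
        rw [inner_add_left, hx, hy, add_zero]
      · intro a x _ hx
        rw [real_inner_smul_left, hx, mul_zero]
    have : ⟪v i, u⟫ = 0 := by
      rw [hu, InnerProductSpace.gramSchmidtNormed, real_inner_smul_right, horth, mul_zero]
    rw [this]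
    simpa using mul_nonneg (le_trans zero_le_one hsqrt2) hC₀
  · -- l < i
    -- u lies in the span of v j, j ≤ l
    have husp : u ∈ Submodule.span ℝ (v '' Set.Iic l) := by
      have hg : InnerProductSpace.gramSchmidt ℝ v l ∈ Submodule.span ℝ (v '' Set.Iic l) :=
        InnerProductSpace.gramSchmidt_mem_span ℝ v le_rfl
      rw [hu, InnerProductSpace.gramSchmidtNormed]
      exact Submodule.smul_mem _ _ hg
    -- coordinate `castAdd i` of u vanishes
    have hcoord : u (Fin.castAdd m i) = 0 := by
      refine Submodule.span_induction ?_ (by simp) ?_ ?_ husp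
      · rintro x ⟨j, hj, rfl⟩
        rw [hfst j i, if_neg (ne_of_lt (lt_of_le_of_lt hj hgt))]
      · intro x y _ _ hx hy
        show (x + y) (Fin.castAdd m i) = 0
        simp [hx, hy]
      · intro a x _ hx
        show (a • x) (Fin.castAdd m i) = 0
        simp [hx]
    -- norm of u is at most 1
    have hnorm : ‖u‖ ≤ 1 := by
      rw [hu, InnerProductSpace.gramSchmidtNormed, norm_smul, norm_inv, RCLike.norm_ofReal, abs_norm]
      rcases eq_or_ne (InnerProductSpace.gramSchmidt ℝ v l) 0 with h | h
      · simp [h]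
      · rw [inv_mul_cancel₀ (norm_ne_zero_iff.mpr h)]
    -- express the inner product
    have hinner : ⟪v i, u⟫ = ∑ j : Fin m, v i (Fin.natAdd d j) * u (Fin.natAdd d j) := by
      rw [PiLp.inner_apply]
      simp only [RCLike.inner_apply, conj_trivial]
      rw [Fin.sum_univ_add]
      have h1 : ∑ j : Fin d, v i (Fin.castAdd m j) * u (Fin.castAdd m j) = 0 := by
        rw [Finset.sum_eq_single i]
        · rw [hcoord, mul_zero]
        · intro j _ hj
          rw [hfst i j, if_neg (Ne.symm hj), zero_mul]
        · intro h; exact absurd (Finset.mem_univ i) h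
      simp_rw [mul_comm _ ((v i) _)]
      rw [h1, zero_add]
    -- Cauchy–Schwarz on the second block
    have hcs : (∑ j : Fin m, v i (Fin.natAdd d j) * u (Fin.natAdd d j)) ^ 2 ≤
        (∑ j : Fin m, (v i (Fin.natAdd d j)) ^ 2) *
        (∑ j : Fin m, (u (Fin.natAdd d j)) ^ 2) :=
      Finset.sum_mul_sq_le_sq_mul_sq _ _ _
    have hA : (0:ℝ) ≤ ∑ j : Fin m, (v i (Fin.natAdd d j)) ^ 2 :=
      Finset.sum_nonneg fun _ _ => sq_nonneg _
    have hB : ∑ j : Fin m, (u (Fin.natAdd d j)) ^ 2 ≤ 1 := by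
      have h1 : ∑ j : Fin m, (u (Fin.natAdd d j)) ^ 2 ≤ ∑ k : Fin (d + m), (u k) ^ 2 := by
        rw [Fin.sum_univ_add (f := fun k => (u k) ^ 2)]
        have : (0:ℝ) ≤ ∑ j : Fin d, (u (Fin.castAdd m j)) ^ 2 :=
          Finset.sum_nonneg fun _ _ => sq_nonneg _
        linarith
      have h2 : ∑ k : Fin (d + m), (u k) ^ 2 = ‖u‖ ^ 2 := by
        rw [EuclideanSpace.norm_eq, Real.sq_sqrt (Finset.sum_nonneg fun _ _ => sq_nonneg _)]
        simp [Real.norm_eq_abs, sq_abs]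
      calc ∑ j : Fin m, (u (Fin.natAdd d j)) ^ 2 ≤ ‖u‖ ^ 2 := h2 ▸ h1
        _ ≤ 1 := by nlinarith [norm_nonneg u]
    have hAC : ∑ j : Fin m, (v i (Fin.natAdd d j)) ^ 2 ≤ C₀ ^ 2 := by
      have := hsnd i
      nlinarith [Real.sq_sqrt hA, Real.sqrt_nonneg (∑ j : Fin m, (v i (Fin.natAdd d j)) ^ 2)]
    have hsq : ⟪v i, u⟫ ^ 2 ≤ C₀ ^ 2 := by
      rw [hinner]
      calc (∑ j : Fin m, v i (Fin.natAdd d j) * u (Fin.natAdd d j)) ^ 2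
          ≤ (∑ j : Fin m, (v i (Fin.natAdd d j)) ^ 2) *
            (∑ j : Fin m, (u (Fin.natAdd d j)) ^ 2) := hcs
        _ ≤ C₀ ^ 2 := by nlinarith
    have : |⟪v i, u⟫| ≤ C₀ := by
      rw [← Real.sqrt_sq hC₀, ← Real.sqrt_sq_eq_abs]
      exact Real.sqrt_le_sqrt hsq
    linarith
end

section
/- Angle estimate via Gram–Schmidt: let w ∈ ℝᵈ×ℝ^{n−d} be obtained by Gram–Schmidt orthonormalization from vectors of the form ŵʲ = (−gⱼ, eʲ) with |gⱼ| ≤ C₀, j = d+1,…,n. Then each resulting unit vector wʲ satisfies ⟨wʲ, eʲ⟩ ≥ (1+C₀²)^{−1/2}, and consequently |wʲ − eʲ|² ≤ 2(1 − (1+C₀²)^{−1/2}) ≤ C₀². -/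
open Finset Submodule RealInnerProductSpace InnerProductSpace

/-- Angle estimate via Gram–Schmidt: from vectors `ŵʲ = (−gⱼ, eʲ)` with `|gⱼ| ≤ C₀`, the
Gram–Schmidt orthonormalization `wʲ` satisfies `⟨wʲ, eʲ⟩ ≥ (1+C₀²)^{−1/2}` and
`|wʲ − eʲ|² ≤ 2(1 − (1+C₀²)^{−1/2}) ≤ C₀²`. -/
theorem stmt_11 (d m : ℕ) (C₀ : ℝ) (hC₀ : 0 ≤ C₀) [WellFoundedLT (Fin m)]
    (w : Fin m → EuclideanSpace ℝ (Fin (d + m)))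
    (hsnd : ∀ j k : Fin m, w j (Fin.natAdd d k) = if j = k then 1 else 0)
    (hfst : ∀ j : Fin m,
      Real.sqrt (∑ i : Fin d, (w j (Fin.castAdd m i)) ^ 2) ≤ C₀) :
    ∀ j : Fin m,
      (1 + C₀ ^ 2) ^ (-(1 / 2) : ℝ) ≤ InnerProductSpace.gramSchmidtNormed ℝ w j (Fin.natAdd d j) ∧
      ‖InnerProductSpace.gramSchmidtNormed ℝ w j - EuclideanSpace.single (Fin.natAdd d j) (1 : ℝ)‖ ^ 2
        ≤ 2 * (1 - (1 + C₀ ^ 2) ^ (-(1 / 2) : ℝ)) ∧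
      ‖InnerProductSpace.gramSchmidtNormed ℝ w j - EuclideanSpace.single (Fin.natAdd d j) (1 : ℝ)‖ ^ 2
        ≤ C₀ ^ 2 := by
  intro j
  classical
  set φ : EuclideanSpace ℝ (Fin (d + m)) →ₗ[ℝ] ℝ :=
    EuclideanSpace.projₗ (Fin.natAdd d j) with hφ
  have hφ_apply : ∀ x : EuclideanSpace ℝ (Fin (d + m)), φ x = x (Fin.natAdd d j) :=
    fun x => rfl
  -- φ vanishes on earlier gramSchmidt vectors
  have hA : ∀ i : Fin m, i < j → φ (gramSchmidt ℝ w i) = 0 := by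
    intro i hi
    have hmem : gramSchmidt ℝ w i ∈ span ℝ (w '' Set.Iic i) :=
      gramSchmidt_mem_span ℝ w le_rfl
    have hker : span ℝ (w '' Set.Iic i) ≤ LinearMap.ker φ := by
      rw [Submodule.span_le]
      rintro x ⟨l, hl, rfl⟩
      have hl' : l ≤ i := hl
      have hlj : l ≠ j := fun h => absurd (h ▸ hl') (not_le.2 hi)
      simp [LinearMap.mem_ker, hφ_apply, hsnd l j, hlj]
    exact hker hmem
  set g := gramSchmidt ℝ w j with hg
  -- φ g = 1
  have hB : φ g = 1 := by
    rw [hg, gramSchmidt_def, map_sub, map_sum]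
    have : ∀ i ∈ Finset.Iio j,
        φ ((ℝ ∙ gramSchmidt ℝ w i).starProjection (w j)) = 0 := by
      intro i hi
      rw [starProjection_singleton, map_smul, hA i (Finset.mem_Iio.1 hi)]
      simp
    rw [Finset.sum_eq_zero this, sub_zero, hφ_apply, hsnd j j]
    simp
  have hg_ne : g ≠ 0 := fun h => by simp [h] at hB
  have hg_pos : (0:ℝ) < ‖g‖ := norm_pos_iff.2 hg_ne
  -- ⟪g, w j⟫ = ‖g‖²
  have hinner : ⟪g, w j⟫ = ‖g‖ ^ 2 := by
    have hdef := gramSchmidt_def'' ℝ w j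
    have : ⟪g, w j⟫ = ⟪g, g⟫ + ∑ i ∈ Finset.Iio j,
        (⟪gramSchmidt ℝ w i, w j⟫ / (‖gramSchmidt ℝ w i‖ : ℝ) ^ 2) *
          ⟪g, gramSchmidt ℝ w i⟫ := by
      conv_lhs => rw [hdef]
      rw [inner_add_right, inner_sum]
      simp only [real_inner_smul_right]
      congr 1
    rw [this, Finset.sum_eq_zero, add_zero, real_inner_self_eq_norm_sq]
    intro i hi
    have : ⟪g, gramSchmidt ℝ w i⟫ = 0 :=
      gramSchmidt_orthogonal ℝ w (Finset.mem_Iio.1 hi).ne'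
    rw [this, mul_zero]
  -- ‖w j‖² ≤ 1 + C₀²
  have hwj_sq : ‖w j‖ ^ 2 ≤ 1 + C₀ ^ 2 := by
    have hnorm : ‖w j‖ ^ 2 = ∑ i : Fin (d + m), (w j i) ^ 2 := by
      rw [EuclideanSpace.norm_eq, Real.sq_sqrt (by positivity)]
      simp [Real.norm_eq_abs, sq_abs]
    rw [hnorm, Fin.sum_univ_add]
    have h2 : ∑ k : Fin m, (w j (Fin.natAdd d k)) ^ 2 = 1 := by
      simp only [hsnd]
      rw [Finset.sum_eq_single j] <;> simp +contextual [eq_comm]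
    have hS : ∑ i : Fin d, (w j (Fin.castAdd m i)) ^ 2 ≤ C₀ ^ 2 := by
      have h := hfst j
      nlinarith [Real.sq_sqrt (show (0:ℝ) ≤ ∑ i : Fin d, (w j (Fin.castAdd m i)) ^ 2 by
        positivity), Real.sqrt_nonneg (∑ i : Fin d, (w j (Fin.castAdd m i)) ^ 2)]
    rw [h2]
    linarith
  set s := Real.sqrt (1 + C₀ ^ 2) with hs
  have hs_pos : (0:ℝ) < s := Real.sqrt_pos.2 (by positivity)
  have hs_sq : s ^ 2 = 1 + C₀ ^ 2 := Real.sq_sqrt (by positivity)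
  have hs_ge : (1:ℝ) ≤ s := by nlinarith
  -- ‖g‖ ≤ s
  have hg_le : ‖g‖ ≤ s := by
    have hcs := real_inner_le_norm g (w j)
    rw [hinner] at hcs
    have hwj : ‖w j‖ ≤ s := by
      have := Real.sqrt_le_sqrt hwj_sq
      rwa [Real.sqrt_sq (norm_nonneg _)] at this
    nlinarith [norm_nonneg (w j)]
  -- rpow rewrite
  have hrpow : (1 + C₀ ^ 2) ^ (-(1 / 2) : ℝ) = s⁻¹ := by
    rw [hs, Real.sqrt_eq_rpow, ← Real.rpow_neg (by positivity)]
  -- component of the normalized vector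
  have hg1 : g (Fin.natAdd d j) = 1 := hB
  have hv_comp : gramSchmidtNormed ℝ w j (Fin.natAdd d j) = ‖g‖⁻¹ := by
    show ‖g‖⁻¹ * g (Fin.natAdd d j) = ‖g‖⁻¹
    rw [hg1, mul_one]
  have hinv : s⁻¹ ≤ ‖g‖⁻¹ := by
    apply inv_anti₀ hg_pos hg_le
  have h1 : (1 + C₀ ^ 2) ^ (-(1 / 2) : ℝ) ≤ gramSchmidtNormed ℝ w j (Fin.natAdd d j) := by
    rw [hrpow, hv_comp]; exact hinv
  have hv_ne : gramSchmidtNormed ℝ w j ≠ 0 := by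
    intro h
    have h0 : (0 : EuclideanSpace ℝ (Fin (d + m))) (Fin.natAdd d j) = 0 := rfl
    rw [h, h0] at hv_comp
    exact absurd hv_comp.symm (inv_ne_zero hg_pos.ne')
  have hv_unit : ‖gramSchmidtNormed ℝ w j‖ = 1 := gramSchmidtNormed_unit_length' hv_ne
  have hinner_e : ⟪gramSchmidtNormed ℝ w j,
      EuclideanSpace.single (Fin.natAdd d j) (1 : ℝ)⟫ = ‖g‖⁻¹ := by
    rw [EuclideanSpace.inner_single_right]
    simp [hv_comp]
  have hsq : ‖gramSchmidtNormed ℝ w j - EuclideanSpace.single (Fin.natAdd d j) (1 : ℝ)‖ ^ 2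
      = 2 - 2 * ‖g‖⁻¹ := by
    rw [norm_sub_sq_real, hinner_e, hv_unit, EuclideanSpace.norm_single]
    norm_num
    ring
  have hinv_s : s * s⁻¹ = 1 := mul_inv_cancel₀ hs_pos.ne'
  have key : 2 - 2 * s⁻¹ ≤ C₀ ^ 2 := by
    have hpos : 0 ≤ (s - 1) ^ 2 * (s + 2) / s := by positivity
    have heq : (s - 1) ^ 2 * (s + 2) / s = s ^ 2 - 1 - (2 - 2 * s⁻¹) := by
      field_simp
      ring
    linarith [hs_sq]
  refine ⟨h1, ?_, ?_⟩
  · rw [hsq, hrpow]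
    linarith
  · rw [hsq]
    linarith
end

section
/- Degree rigidity for proper local diffeomorphisms: let U, V ⊂ ℝⁿ be open and connected, and let ρ : U → V be a C¹ proper map whose differential is invertible at every point. Define N(z) ∈ {0,1,2} according to whether ρ⁻¹(z) is empty, a single point, or contains at least two points. Then N is constant on V; in particular, if ρ is injective somewhere on an open subset in the sense that some value is attained exactly once, then ρ is a bijection from U onto V (and hence a diffeomorphism). -/
/-- Degree rigidity for proper local diffeomorphisms: the counting function
`N(z) ∈ {0,1,2}` (empty / exactly one / at least two preimages) is constant on the
connected open set `V`; in particular if some value is attained exactly once, then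
`ρ` is a bijection from `U` onto `V`. -/
theorem stmt_14 (n : ℕ)
    (U V : Set (EuclideanSpace ℝ (Fin n)))
    (hU : IsOpen U) (hV : IsOpen V) (hUc : IsConnected U) (hVc : IsConnected V)
    (ρ : EuclideanSpace ℝ (Fin n) → EuclideanSpace ℝ (Fin n))
    (hmaps : Set.MapsTo ρ U V)
    (hC1 : ContDiffOn ℝ 1 ρ U)
    (hdiff : ∀ y ∈ U, ∃ L : EuclideanSpace ℝ (Fin n) ≃L[ℝ] EuclideanSpace ℝ (Fin n),
      HasFDerivAt ρ (L : EuclideanSpace ℝ (Fin n) →L[ℝ] EuclideanSpace ℝ (Fin n)) y)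
    (hproper : ∀ K : Set (EuclideanSpace ℝ (Fin n)), K ⊆ V → IsCompact K →
      IsCompact {y | y ∈ U ∧ ρ y ∈ K}) :
    (∀ z₁ ∈ V, ∀ z₂ ∈ V,
      (({y | y ∈ U ∧ ρ y = z₁} = ∅) ↔ ({y | y ∈ U ∧ ρ y = z₂} = ∅)) ∧
      ((∃! y, y ∈ U ∧ ρ y = z₁) ↔ (∃! y, y ∈ U ∧ ρ y = z₂))) ∧
    ((∃ z₀ ∈ V, ∃! y, y ∈ U ∧ ρ y = z₀) → Set.BijOn ρ U V) := by
  classical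
  have hcont : ContinuousOn ρ U := hC1.continuousOn
  -- local inverse function theorem package
  have hloc : ∀ y ∈ U, ∃ s : Set (EuclideanSpace ℝ (Fin n)),
      IsOpen s ∧ y ∈ s ∧ s ⊆ U ∧ Set.InjOn ρ s ∧
      ∀ t, t ⊆ s → IsOpen t → IsOpen (ρ '' t) := by
    intro y hy
    obtain ⟨L, hL⟩ := hdiff y hy
    have hstrict : HasStrictFDerivAt ρ
        (L : EuclideanSpace ℝ (Fin n) →L[ℝ] EuclideanSpace ℝ (Fin n)) y :=
      (hC1.contDiffAt (hU.mem_nhds hy)).hasStrictFDerivAt' hL one_ne_zero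
    set P := hstrict.toOpenPartialHomeomorph ρ with hPdef
    have hPcoe : (P : EuclideanSpace ℝ (Fin n) → EuclideanSpace ℝ (Fin n)) = ρ :=
      hstrict.toOpenPartialHomeomorph_coe
    refine ⟨P.source ∩ U, P.open_source.inter hU,
      ⟨hstrict.mem_toOpenPartialHomeomorph_source, hy⟩, Set.inter_subset_right, ?_, ?_⟩
    · have := P.injOn
      rw [hPcoe] at this
      exact this.mono Set.inter_subset_left
    · intro t ht hto
      have : IsOpen (P '' t) :=
        P.isOpen_image_of_subset_source hto (ht.trans Set.inter_subset_left)
      rwa [hPcoe] at this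
  -- surjectivity : every z ∈ V has a preimage
  have hUne : U.Nonempty := hUc.nonempty
  have himage_sub : ρ '' U ⊆ V := hmaps.image_subset
  have himage_open : IsOpen (ρ '' U) := by
    rw [isOpen_iff_forall_mem_open]
    rintro z ⟨y, hy, rfl⟩
    obtain ⟨s, hso, hys, hsU, -, himg⟩ := hloc y hy
    exact ⟨ρ '' s, Set.image_mono hsU, himg s subset_rfl hso, ⟨y, hys, rfl⟩⟩
  have hclosedV : ∀ z ∈ V, z ∈ closure (ρ '' U) → z ∈ ρ '' U := by
    intro z hzV hzc
    obtain ⟨ε, hε, hball⟩ := Metric.isOpen_iff.1 hV z hzV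
    have hK : Metric.closedBall z (ε / 2) ⊆ V := fun x hx =>
      hball (lt_of_le_of_lt (Metric.mem_closedBall.1 hx) (by linarith))
    set C := {y | y ∈ U ∧ ρ y ∈ Metric.closedBall z (ε / 2)} with hCdef
    have hCc : IsCompact C := hproper _ hK (isCompact_closedBall z (ε / 2))
    have himKc : IsCompact (ρ '' C) :=
      hCc.image_of_continuousOn (hcont.mono fun y hy => hy.1)
    have h1 : z ∈ closure (ρ '' U ∩ Metric.ball z (ε / 2)) := by
      rw [mem_closure_iff] at hzc ⊢
      intro o ho hzo
      obtain ⟨w, hwo, hwim⟩ := hzc (o ∩ Metric.ball z (ε / 2))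
        (ho.inter Metric.isOpen_ball) ⟨hzo, Metric.mem_ball_self (by linarith)⟩
      exact ⟨w, hwo.1, hwim, hwo.2⟩
    have h2 : ρ '' U ∩ Metric.ball z (ε / 2) ⊆ ρ '' C := by
      rintro w ⟨⟨y, hyU, rfl⟩, hwb⟩
      exact ⟨y, ⟨hyU, Metric.ball_subset_closedBall hwb⟩, rfl⟩
    have h3 : z ∈ ρ '' C :=
      himKc.isClosed.closure_subset ((closure_mono h2) h1)
    obtain ⟨y, hyC, rfl⟩ := h3
    exact ⟨y, hyC.1, rfl⟩
  have hfiber_ne : ∀ z ∈ V, ∃ y, y ∈ U ∧ ρ y = z := by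
    intro z hzV
    -- connectedness argument: ρ '' U is clopen in V
    by_contra hno
    push_neg at hno
    set B := V \ closure (ρ '' U) with hBdef
    have hBo : IsOpen B := by
      have : B = V ∩ (closure (ρ '' U))ᶜ := rfl
      rw [this]
      exact hV.inter isClosed_closure.isOpen_compl
    have hVcover : V ⊆ ρ '' U ∪ B := by
      intro w hwV
      by_cases hwc : w ∈ closure (ρ '' U)
      · exact Or.inl (hclosedV w hwV hwc)
      · exact Or.inr ⟨hwV, hwc⟩
    have hA_ne : (V ∩ ρ '' U).Nonempty := by
      obtain ⟨y0, hy0⟩ := hUne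
      exact ⟨ρ y0, hmaps hy0, ⟨y0, hy0, rfl⟩⟩
    have hB_ne : (V ∩ B).Nonempty := by
      refine ⟨z, hzV, hzV, fun hc => ?_⟩
      obtain ⟨y, hyU, hyz⟩ := hclosedV z hzV hc
      exact hno y hyU hyz
    obtain ⟨w, -, hw1, hw2⟩ := hVc.isPreconnected _ _ himage_open hBo hVcover hA_ne hB_ne
    exact hw2.2 (subset_closure hw1)
  -- openness of the "exactly one" locus
  have hone_open : ∀ z ∈ V, (∃! y, y ∈ U ∧ ρ y = z) →
      ∃ W, IsOpen W ∧ z ∈ W ∧ ∀ z' ∈ W, ∃! y, y ∈ U ∧ ρ y = z' := by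
    intro z hzV hz
    obtain ⟨y, ⟨hyU, hyz⟩, huniq⟩ := hz
    obtain ⟨s, hso, hys, hsU, hinj, himg⟩ := hloc y hyU
    obtain ⟨ε, hε, hball⟩ := Metric.isOpen_iff.1 hV z hzV
    have hK : Metric.closedBall z (ε / 2) ⊆ V := fun x hx =>
      hball (lt_of_le_of_lt (Metric.mem_closedBall.1 hx) (by linarith))
    set C := {y' | y' ∈ U ∧ ρ y' ∈ Metric.closedBall z (ε / 2)} with hCdef
    have hCc : IsCompact C := hproper _ hK (isCompact_closedBall z (ε / 2))
    have hDc : IsCompact (C \ s) := hCc.diff hso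
    have hDimc : IsCompact (ρ '' (C \ s)) :=
      hDc.image_of_continuousOn (hcont.mono fun y' hy' => hy'.1.1)
    have hzD : z ∉ ρ '' (C \ s) := by
      rintro ⟨w, ⟨⟨hwU, -⟩, hws⟩, hwz⟩
      exact hws (huniq w ⟨hwU, hwz⟩ ▸ hys)
    refine ⟨Metric.ball z (ε / 2) ∩ (ρ '' (C \ s))ᶜ ∩ ρ '' s,
      ((Metric.isOpen_ball.inter hDimc.isClosed.isOpen_compl).inter
        (himg s subset_rfl hso)),
      ⟨⟨Metric.mem_ball_self (by linarith), hzD⟩, ⟨y, hys, hyz⟩⟩, ?_⟩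
    rintro z' ⟨⟨hz'b, hz'D⟩, y', hy's, rfl⟩
    refine ⟨y', ⟨hsU hy's, rfl⟩, ?_⟩
    rintro y'' ⟨hy''U, hy''⟩
    have hy''C : y'' ∈ C := ⟨hy''U, by
      rw [hy'']; exact Metric.ball_subset_closedBall hz'b⟩
    have hy''s : y'' ∈ s := by
      by_contra hns
      exact hz'D ⟨y'', ⟨hy''C, hns⟩, hy''⟩
    exact hinj hy''s hy's hy''
  -- openness of the "at least two" locus
  have htwo_open : ∀ z, ∀ y₁ y₂, y₁ ∈ U → y₂ ∈ U → ρ y₁ = z → ρ y₂ = z → y₁ ≠ y₂ →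
      ∃ W, IsOpen W ∧ z ∈ W ∧ ∀ z' ∈ W, ¬ ∃! y, y ∈ U ∧ ρ y = z' := by
    intro z y₁ y₂ h₁U h₂U h₁z h₂z hne
    obtain ⟨s₁, hs₁o, h₁s, hs₁U, -, himg₁⟩ := hloc y₁ h₁U
    obtain ⟨s₂, hs₂o, h₂s, hs₂U, -, himg₂⟩ := hloc y₂ h₂U
    set r := dist y₁ y₂ / 2 with hrdef
    have hr : 0 < r := by
      have := dist_pos.2 hne
      positivity
    set t₁ := s₁ ∩ Metric.ball y₁ r with ht₁def
    set t₂ := s₂ ∩ Metric.ball y₂ r with ht₂def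
    have hdisj : ∀ w, w ∈ t₁ → w ∉ t₂ := by
      rintro w ⟨-, hw1⟩ ⟨-, hw2⟩
      have h1 := Metric.mem_ball.1 hw1
      have h2 := Metric.mem_ball.1 hw2
      have ht : dist y₁ y₂ ≤ dist y₁ w + dist w y₂ := dist_triangle _ _ _
      rw [dist_comm y₁ w] at ht
      rw [hrdef] at h1 h2
      linarith
    refine ⟨ρ '' t₁ ∩ ρ '' t₂,
      (himg₁ t₁ Set.inter_subset_left (hs₁o.inter Metric.isOpen_ball)).inter
        (himg₂ t₂ Set.inter_subset_left (hs₂o.inter Metric.isOpen_ball)),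
      ⟨⟨y₁, ⟨h₁s, Metric.mem_ball_self hr⟩, h₁z⟩,
       ⟨y₂, ⟨h₂s, Metric.mem_ball_self hr⟩, h₂z⟩⟩, ?_⟩
    rintro z' ⟨⟨w₁, hw₁, hw₁z⟩, ⟨w₂, hw₂, hw₂z⟩⟩ ⟨y, -, huniq⟩
    have e₁ : w₁ = y := huniq w₁ ⟨hs₁U hw₁.1, hw₁z⟩
    have e₂ : w₂ = y := huniq w₂ ⟨hs₂U hw₂.1, hw₂z⟩
    have e : w₁ = w₂ := e₁.trans e₂.symm
    exact hdisj w₁ hw₁ (by rw [e]; exact hw₂)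
  -- the dichotomy by connectedness of V
  have key : (∀ z ∈ V, ∃! y, y ∈ U ∧ ρ y = z) ∨
      (∀ z ∈ V, ¬ ∃! y, y ∈ U ∧ ρ y = z) := by
    set OA := {z | ∃ W, IsOpen W ∧ z ∈ W ∧ ∀ z' ∈ W, ∃! y, y ∈ U ∧ ρ y = z'} with hOAdef
    set OB := {z | ∃ W, IsOpen W ∧ z ∈ W ∧ ∀ z' ∈ W, ¬ ∃! y, y ∈ U ∧ ρ y = z'} with hOBdef
    have hOAo : IsOpen OA := by
      rw [isOpen_iff_forall_mem_open]
      rintro z ⟨W, hWo, hzW, hW⟩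
      exact ⟨W, fun w hw => ⟨W, hWo, hw, hW⟩, hWo, hzW⟩
    have hOBo : IsOpen OB := by
      rw [isOpen_iff_forall_mem_open]
      rintro z ⟨W, hWo, hzW, hW⟩
      exact ⟨W, fun w hw => ⟨W, hWo, hw, hW⟩, hWo, hzW⟩
    have hAprop : ∀ z ∈ OA, ∃! y, y ∈ U ∧ ρ y = z := by
      rintro z ⟨W, hWo, hzW, hW⟩; exact hW z hzW
    have hBprop : ∀ z ∈ OB, ¬ ∃! y, y ∈ U ∧ ρ y = z := by
      rintro z ⟨W, hWo, hzW, hW⟩; exact hW z hzW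
    have hcover : V ⊆ OA ∪ OB := by
      intro z hzV
      by_cases hz : ∃! y, y ∈ U ∧ ρ y = z
      · obtain ⟨W, hWo, hzW, hW⟩ := hone_open z hzV hz
        exact Or.inl ⟨W, hWo, hzW, hW⟩
      · obtain ⟨y₁, hy₁U, hy₁z⟩ := hfiber_ne z hzV
        have : ∃ y₂, (y₂ ∈ U ∧ ρ y₂ = z) ∧ y₂ ≠ y₁ := by
          by_contra hc
          push_neg at hc
          exact hz ⟨y₁, ⟨hy₁U, hy₁z⟩, fun y hy => hc y hy⟩
        obtain ⟨y₂, ⟨hy₂U, hy₂z⟩, hne⟩ := this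
        obtain ⟨W, hWo, hzW, hW⟩ := htwo_open z y₂ y₁ hy₂U hy₁U hy₂z hy₁z hne
        exact Or.inr ⟨W, hWo, hzW, hW⟩
    by_cases hBne : (V ∩ OB).Nonempty
    · by_cases hAne : (V ∩ OA).Nonempty
      · obtain ⟨w, -, hwA, hwB⟩ := hVc.isPreconnected _ _ hOAo hOBo hcover hAne hBne
        exact absurd (hAprop w hwA) (hBprop w hwB)
      · refine Or.inr fun z hzV => hBprop z ?_
        rcases hcover hzV with h | h
        · exact absurd ⟨z, hzV, h⟩ hAne
        · exact h
    · refine Or.inl fun z hzV => hAprop z ?_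
      rcases hcover hzV with h | h
      · exact h
      · exact absurd ⟨z, hzV, h⟩ hBne
  constructor
  · intro z₁ hz₁ z₂ hz₂
    constructor
    · have h1 : {y | y ∈ U ∧ ρ y = z₁} ≠ ∅ := by
        obtain ⟨y, hy⟩ := hfiber_ne z₁ hz₁
        exact Set.nonempty_iff_ne_empty.1 ⟨y, hy⟩
      have h2 : {y | y ∈ U ∧ ρ y = z₂} ≠ ∅ := by
        obtain ⟨y, hy⟩ := hfiber_ne z₂ hz₂
        exact Set.nonempty_iff_ne_empty.1 ⟨y, hy⟩
      exact ⟨fun h => absurd h h1, fun h => absurd h h2⟩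
    · rcases key with h | h
      · exact ⟨fun _ => h z₂ hz₂, fun _ => h z₁ hz₁⟩
      · exact ⟨fun hc => absurd hc (h z₁ hz₁), fun hc => absurd hc (h z₂ hz₂)⟩
  · rintro ⟨z₀, hz₀V, hz₀⟩
    have hall : ∀ z ∈ V, ∃! y, y ∈ U ∧ ρ y = z := by
      rcases key with h | h
      · exact h
      · exact absurd hz₀ (h z₀ hz₀V)
    refine ⟨hmaps, ?_, ?_⟩
    · intro y₁ h₁ y₂ h₂ he
      obtain ⟨y, -, huniq⟩ := hall (ρ y₁) (hmaps h₁)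
      rw [huniq y₁ ⟨h₁, rfl⟩, huniq y₂ ⟨h₂, he.symm⟩]
    · intro z hzV
      obtain ⟨y, ⟨hyU, hyz⟩, -⟩ := hall z hzV
      exact ⟨y, hyU, hyz⟩
end
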